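/- Let n ≥ 1 be an integer and let γ₁, …, γ_m be finite lattice paths in the grid {0, …, n} × {0, …, n}, where γ_i is a sequence of points p^i_0, …, p^i_{k_i} with k_i ≥ 1 such that either every increment p^i_{j+1} − p^i_j lies in {(1,0), (0,1)} or every increment lies in {(1,0), (0,−1)} (each path is monotonic), and both endpoints p^i_0 and p^i_{k_i} lie on the boundary of the grid (i.e., have some coordinate equal to 0 or to n). Let R_i ⊆ ℤ × ℤ be the spanning rectangle of γ_i, namely the product of the closed integer intervals between the first coordinates and between the second coordinates of its two endpoints, and assume R₁, …, R_m are pairwise disjoint subsets of ℤ × ℤ. Then the total number of corners, Σ_i #{j : 1 ≤ j ≤ k_i − 1 and p^i_{j+1} − p^i_j ≠ p^i_j − p^i_{j−1}}, is at most 4(n + 1). -/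

import Mathlib

/-- A point of `ℤ × ℤ` is on the boundary of the grid `{0,…,n} × {0,…,n}`. -/
def onBd (n : ℕ) (q : ℤ × ℤ) : Prop :=
  q.1 = 0 ∨ q.1 = (n : ℤ) ∨ q.2 = 0 ∨ q.2 = (n : ℤ)

/-- The boundary of the grid as a finset. -/
noncomputable def Bfin (n : ℕ) : Finset (ℤ × ℤ) :=
  ({0, (n : ℤ)} ×ˢ Finset.Icc (0 : ℤ) (n : ℤ)) ∪
    (Finset.Icc (0 : ℤ) (n : ℤ) ×ˢ {0, (n : ℤ)})

lemma card_Bfin (n : ℕ) : (Bfin n).card ≤ 4 * (n + 1) := by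
  have hIcc : (Finset.Icc (0 : ℤ) (n : ℤ)).card = n + 1 := by
    rw [Int.card_Icc]; omega
  have h2 : ({0, (n : ℤ)} : Finset ℤ).card ≤ 2 :=
    (Finset.card_insert_le _ _).trans (by simp)
  calc (Bfin n).card
      ≤ ({0, (n : ℤ)} ×ˢ Finset.Icc (0 : ℤ) (n : ℤ)).card
        + (Finset.Icc (0 : ℤ) (n : ℤ) ×ˢ ({0, (n : ℤ)} : Finset ℤ)).card :=
        Finset.card_union_le _ _
    _ ≤ 2 * (n + 1) + (n + 1) * 2 := by
        rw [Finset.card_product, Finset.card_product, hIcc]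
        exact Nat.add_le_add (Nat.mul_le_mul_right _ h2) (Nat.mul_le_mul_left _ h2)
    _ ≤ 4 * (n + 1) := by omega

lemma corner_bound (K : ℕ) (p : ℕ → ℤ × ℤ) (x y : ℤ × ℤ)
    (hd : ∀ t < K, p (t + 1) - p t = x ∨ p (t + 1) - p t = y) :
    ((Finset.Icc 1 (K - 1)).filter
        (fun j => p (j + 1) - p j ≠ p j - p (j - 1))).card
      ≤ 2 * ((Finset.range K).filter (fun t => p (t + 1) - p t = y)).card := by
  classical
  set C := (Finset.Icc 1 (K - 1)).filter
      (fun j => p (j + 1) - p j ≠ p j - p (j - 1)) with hC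
  set T := (Finset.range K).filter (fun t => p (t + 1) - p t = y) with hT
  have hmemC : ∀ j ∈ C, 1 ≤ j ∧ j < K ∧ p (j + 1) - p j ≠ p j - p (j - 1) := by
    intro j hj
    simp only [hC, Finset.mem_filter, Finset.mem_Icc] at hj
    exact ⟨hj.1.1, by omega, hj.2⟩
  have h1 : (C.filter (fun j => p (j + 1) - p j = y)).card ≤ T.card := by
    apply Finset.card_le_card
    intro j hj
    obtain ⟨hj1, hj2⟩ := Finset.mem_filter.mp hj
    obtain ⟨hj3, hj4, _⟩ := hmemC j hj1
    exact Finset.mem_filter.mpr ⟨Finset.mem_range.mpr hj4, hj2⟩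
  have h2 : (C.filter (fun j => ¬ p (j + 1) - p j = y)).card ≤ T.card := by
    apply Finset.card_le_card_of_injOn (fun j => j - 1)
    · intro j hj
      obtain ⟨hj1, hj2⟩ := Finset.mem_filter.mp hj
      obtain ⟨hj3, hj4, hj5⟩ := hmemC j hj1
      have hjx : p (j + 1) - p j = x := (hd j hj4).resolve_right hj2
      have hsucc : j - 1 + 1 = j := by omega
      have : p (j - 1 + 1) - p (j - 1) = y := by
        rcases hd (j - 1) (by omega) with h | h
        · exfalso; rw [hsucc] at h; rw [hjx] at hj5; exact hj5 h.symm
        · exact h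
      exact Finset.mem_filter.mpr ⟨Finset.mem_range.mpr (by show j - 1 < K; omega), this⟩
    · intro a ha b hb hab
      have h1 := (hmemC a (Finset.mem_filter.mp ha).1).1
      have h2 := (hmemC b (Finset.mem_filter.mp hb).1).1
      have hab' : a - 1 = b - 1 := hab
      omega
  have := Finset.card_filter_add_card_filter_not
    (s := C) (p := fun j => p (j + 1) - p j = y)
  omega

lemma side_sub (n : ℕ) (a b q : ℤ × ℤ) (C : Finset (ℤ × ℤ))
    (hq1 : q.1 ∈ Finset.uIcc a.1 b.1) (hq2 : q.2 ∈ Finset.uIcc a.2 b.2)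
    (hX : Finset.uIcc a.1 b.1 ⊆ Finset.Icc 0 (n : ℤ))
    (hY : Finset.uIcc a.2 b.2 ⊆ Finset.Icc 0 (n : ℤ))
    (h : (C = {q.1} ×ˢ Finset.uIcc a.2 b.2 ∧ (q.1 = 0 ∨ q.1 = (n : ℤ))) ∨
         (C = Finset.uIcc a.1 b.1 ×ˢ {q.2} ∧ (q.2 = 0 ∨ q.2 = (n : ℤ)))) :
    ↑C ⊆ (Set.uIcc a.1 b.1 ×ˢ Set.uIcc a.2 b.2) ∧ C ⊆ Bfin n := by
  constructor
  · intro z hz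
    rcases h with ⟨rfl, -⟩ | ⟨rfl, -⟩ <;>
      simp only [Finset.coe_product, Finset.coe_singleton, Finset.coe_uIcc,
        Set.mem_prod, Set.mem_singleton_iff] at hz ⊢
    · exact ⟨hz.1 ▸ (by rw [← Finset.coe_uIcc]; exact_mod_cast hq1), hz.2⟩
    · exact ⟨hz.1, hz.2 ▸ (by rw [← Finset.coe_uIcc]; exact_mod_cast hq2)⟩
  · intro z hz
    rcases h with ⟨rfl, hbd⟩ | ⟨rfl, hbd⟩ <;>
      rw [Finset.mem_product] at hz
    · exact Finset.mem_union_left _ (Finset.mem_product.mpr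
        ⟨by rcases hbd with h | h <;> simp [Finset.mem_singleton.mp hz.1, h],
          hY hz.2⟩)
    · exact Finset.mem_union_right _ (Finset.mem_product.mpr
        ⟨hX hz.1,
          by rcases hbd with h | h <;> simp [Finset.mem_singleton.mp hz.2, h]⟩)

lemma path_bound (n K : ℕ) (hK : 1 ≤ K) (p : ℕ → ℤ × ℤ)
    (hgrid : ∀ j ≤ K,
      (p j).1 ∈ Set.Icc (0 : ℤ) (n : ℤ) ∧ (p j).2 ∈ Set.Icc (0 : ℤ) (n : ℤ))
    (hm : (∀ j < K, p (j + 1) - p j ∈ ({(1, 0), (0, 1)} : Set (ℤ × ℤ))) ∨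
          (∀ j < K, p (j + 1) - p j ∈ ({(1, 0), (0, -1)} : Set (ℤ × ℤ))))
    (ha : onBd n (p 0)) (hb : onBd n (p K)) :
    ∃ S : Finset (ℤ × ℤ),
      ↑S ⊆ (Set.uIcc (p 0).1 (p K).1 ×ˢ Set.uIcc (p 0).2 (p K).2) ∧
      S ⊆ Bfin n ∧
      ((Finset.Icc 1 (K - 1)).filter
        (fun j => p (j + 1) - p j ≠ p j - p (j - 1))).card ≤ S.card := by
  classical
  obtain ⟨ε, hε, hd⟩ : ∃ ε : ℤ, (ε = 1 ∨ ε = -1) ∧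
      ∀ t < K, p (t + 1) - p t = (1, 0) ∨ p (t + 1) - p t = (0, ε) := by
    rcases hm with h | h
    · exact ⟨1, Or.inl rfl, fun t ht => by simpa using h t ht⟩
    · exact ⟨-1, Or.inr rfl, fun t ht => by simpa using h t ht⟩
  set a := p 0 with ha'
  set b := p K with hb'
  set W := ((Finset.range K).filter (fun t => p (t + 1) - p t = (1, 0))).card with hW
  set H := ((Finset.range K).filter (fun t => p (t + 1) - p t = (0, ε))).card with hH
  have hconst : ∀ (s : Finset ℕ) (f : ℕ → ℤ) (c : ℤ), (∀ t ∈ s, f t = c) →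
      ∑ t ∈ s, f t = s.card * c := by
    intro s f c h
    rw [Finset.sum_congr rfl h, Finset.sum_const, nsmul_eq_mul]
  have hne10 : ∀ t < K, ¬ p (t + 1) - p t = (1, 0) → p (t + 1) - p t = (0, ε) :=
    fun t ht h => (hd t ht).resolve_left h
  have hfiltereq : (Finset.range K).filter (fun t => ¬ p (t + 1) - p t = (1, 0))
      = (Finset.range K).filter (fun t => p (t + 1) - p t = (0, ε)) := by
    apply Finset.filter_congr
    intro t ht
    constructor
    · exact hne10 t (Finset.mem_range.mp ht)
    · intro h h'
      rw [h'] at h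
      exact one_ne_zero (congrArg Prod.fst h)
  have htel : p K - p 0 = ∑ t ∈ Finset.range K, (p (t + 1) - p t) :=
    (Finset.sum_range_sub p K).symm
  -- first coordinate
  have hx : b.1 - a.1 = (W : ℤ) := by
    have h1 : (p K - p 0).1 = ∑ t ∈ Finset.range K, (p (t + 1) - p t).1 := by
      rw [htel]; exact Prod.fst_sum
    have hsplit := Finset.sum_filter_add_sum_filter_not (Finset.range K)
      (fun t => p (t + 1) - p t = (1, 0)) (fun t => (p (t + 1) - p t).1)
    have h2 : ∑ t ∈ (Finset.range K).filter (fun t => p (t + 1) - p t = (1, 0)),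
        (p (t + 1) - p t).1 = (W : ℤ) * 1 :=
      hconst _ _ 1 (fun t ht => by rw [(Finset.mem_filter.mp ht).2])
    have h3 : ∑ t ∈ (Finset.range K).filter (fun t => ¬ p (t + 1) - p t = (1, 0)),
        (p (t + 1) - p t).1 = 0 := by
      apply Finset.sum_eq_zero
      intro t ht
      obtain ⟨ht1, ht2⟩ := Finset.mem_filter.mp ht
      rw [hne10 t (Finset.mem_range.mp ht1) ht2]
    rw [← hsplit, h2, h3, add_zero, mul_one] at h1
    rw [Prod.fst_sub] at h1
    exact h1
  -- second coordinate
  have hy : b.2 - a.2 = (H : ℤ) * ε := by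
    have h1 : (p K - p 0).2 = ∑ t ∈ Finset.range K, (p (t + 1) - p t).2 := by
      rw [htel]; exact Prod.snd_sum
    have hsplit := Finset.sum_filter_add_sum_filter_not (Finset.range K)
      (fun t => p (t + 1) - p t = (1, 0)) (fun t => (p (t + 1) - p t).2)
    have h2 : ∑ t ∈ (Finset.range K).filter (fun t => p (t + 1) - p t = (1, 0)),
        (p (t + 1) - p t).2 = 0 := by
      apply Finset.sum_eq_zero
      intro t ht
      rw [(Finset.mem_filter.mp ht).2]
    have h3 : ∑ t ∈ (Finset.range K).filter (fun t => ¬ p (t + 1) - p t = (1, 0)),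
        (p (t + 1) - p t).2 = (H : ℤ) * ε := by
      rw [hfiltereq]
      exact hconst _ _ ε (fun t ht => by rw [(Finset.mem_filter.mp ht).2])
    rw [← hsplit, h2, h3, zero_add] at h1
    rw [Prod.snd_sub] at h1
    exact h1
  -- grid bounds
  obtain ⟨⟨ha1l, ha1u⟩, ha2l, ha2u⟩ :
      ((0 : ℤ) ≤ a.1 ∧ a.1 ≤ n) ∧ (0 : ℤ) ≤ a.2 ∧ a.2 ≤ n := by
    simpa [Set.mem_Icc] using hgrid 0 (by omega)
  obtain ⟨⟨hb1l, hb1u⟩, hb2l, hb2u⟩ :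
      ((0 : ℤ) ≤ b.1 ∧ b.1 ≤ n) ∧ (0 : ℤ) ≤ b.2 ∧ b.2 ≤ n := by
    simpa [Set.mem_Icc] using hgrid K le_rfl
  have hXsub : Finset.uIcc a.1 b.1 ⊆ Finset.Icc 0 (n : ℤ) := by
    intro z hz
    rw [Finset.mem_uIcc] at hz
    rw [Finset.mem_Icc]
    omega
  have hYsub : Finset.uIcc a.2 b.2 ⊆ Finset.Icc 0 (n : ℤ) := by
    intro z hz
    rw [Finset.mem_uIcc] at hz
    rw [Finset.mem_Icc]
    omega
  -- cardinalities of the sides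
  have hcX : (Finset.uIcc a.1 b.1).card = W + 1 := by
    rw [Int.card_uIcc, hx]
    simp
  have hcY : (Finset.uIcc a.2 b.2).card = H + 1 := by
    rw [Int.card_uIcc, hy]
    rcases hε with rfl | rfl <;> simp [Int.natAbs_mul]
  -- corner count bounds
  have hC2H := corner_bound K p (1, 0) (0, ε) hd
  have hC2W := corner_bound K p (0, ε) (1, 0) (fun t ht => (hd t ht).symm)
  rw [← hH] at hC2H
  rw [← hW] at hC2W
  -- sides through the endpoints
  have haB : a.1 = 0 ∨ a.1 = (n : ℤ) ∨ a.2 = 0 ∨ a.2 = (n : ℤ) := ha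
  have hbB : b.1 = 0 ∨ b.1 = (n : ℤ) ∨ b.2 = 0 ∨ b.2 = (n : ℤ) := hb
  have hAex : ∃ A : Finset (ℤ × ℤ),
      (A = {a.1} ×ˢ Finset.uIcc a.2 b.2 ∧ (a.1 = 0 ∨ a.1 = (n : ℤ))) ∨
      (A = Finset.uIcc a.1 b.1 ×ˢ {a.2} ∧ (a.2 = 0 ∨ a.2 = (n : ℤ))) := by
    rcases haB with h | h | h | h
    · exact ⟨_, Or.inl ⟨rfl, Or.inl h⟩⟩
    · exact ⟨_, Or.inl ⟨rfl, Or.inr h⟩⟩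
    · exact ⟨_, Or.inr ⟨rfl, Or.inl h⟩⟩
    · exact ⟨_, Or.inr ⟨rfl, Or.inr h⟩⟩
  have hBex : ∃ B : Finset (ℤ × ℤ),
      (B = {b.1} ×ˢ Finset.uIcc a.2 b.2 ∧ (b.1 = 0 ∨ b.1 = (n : ℤ))) ∨
      (B = Finset.uIcc a.1 b.1 ×ˢ {b.2} ∧ (b.2 = 0 ∨ b.2 = (n : ℤ))) := by
    rcases hbB with h | h | h | h
    · exact ⟨_, Or.inl ⟨rfl, Or.inl h⟩⟩
    · exact ⟨_, Or.inl ⟨rfl, Or.inr h⟩⟩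
    · exact ⟨_, Or.inr ⟨rfl, Or.inl h⟩⟩
    · exact ⟨_, Or.inr ⟨rfl, Or.inr h⟩⟩
  obtain ⟨A, hA⟩ := hAex
  obtain ⟨B, hB⟩ := hBex
  have hsubA := side_sub n a b a A Finset.left_mem_uIcc Finset.left_mem_uIcc
    hXsub hYsub hA
  have hsubB := side_sub n a b b B Finset.right_mem_uIcc Finset.right_mem_uIcc
    hXsub hYsub hB
  refine ⟨A ∪ B, ?_, ?_, ?_⟩
  · rw [Finset.coe_union]
    exact Set.union_subset hsubA.1 hsubB.1
  · exact Finset.union_subset hsubA.2 hsubB.2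
  · -- cardinality bound
    have hunion := Finset.card_union_add_card_inter A B
    rcases hA with ⟨hAeq, -⟩ | ⟨hAeq, -⟩ <;> rcases hB with ⟨hBeq, -⟩ | ⟨hBeq, -⟩
    · -- both vertical
      by_cases hW0 : W = 0
      · omega
      · have hne : a.1 ≠ b.1 := by intro h; omega
        have hint : (A ∩ B).card ≤ 1 := by
          apply Finset.card_le_one.mpr
          intro u hu v hv
          exfalso
          rw [Finset.mem_inter, hAeq, hBeq, Finset.mem_product,
            Finset.mem_product, Finset.mem_singleton, Finset.mem_singleton] at hu
          exact hne (hu.1.1.symm.trans hu.2.1)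
        have hcA : A.card = H + 1 := by
          rw [hAeq, Finset.card_product, Finset.card_singleton, hcY, one_mul]
        have hcB : B.card = H + 1 := by
          rw [hBeq, Finset.card_product, Finset.card_singleton, hcY, one_mul]
        omega
    · -- A vertical, B horizontal
      have hint : (A ∩ B).card ≤ 1 := by
        apply Finset.card_le_one.mpr
        intro u hu v hv
        rw [Finset.mem_inter, hAeq, hBeq, Finset.mem_product,
          Finset.mem_product, Finset.mem_singleton, Finset.mem_singleton] at hu hv
        exact Prod.ext (hu.1.1.trans hv.1.1.symm) (hu.2.2.trans hv.2.2.symm)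
      have hcA : A.card = H + 1 := by
        rw [hAeq, Finset.card_product, Finset.card_singleton, hcY, one_mul]
      have hcB : B.card = W + 1 := by
        rw [hBeq, Finset.card_product, Finset.card_singleton, hcX, mul_one]
      omega
    · -- A horizontal, B vertical
      have hint : (A ∩ B).card ≤ 1 := by
        apply Finset.card_le_one.mpr
        intro u hu v hv
        rw [Finset.mem_inter, hAeq, hBeq, Finset.mem_product,
          Finset.mem_product, Finset.mem_singleton, Finset.mem_singleton] at hu hv
        exact Prod.ext (hu.2.1.trans hv.2.1.symm) (hu.1.2.trans hv.1.2.symm)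
      have hcA : A.card = W + 1 := by
        rw [hAeq, Finset.card_product, Finset.card_singleton, hcX, mul_one]
      have hcB : B.card = H + 1 := by
        rw [hBeq, Finset.card_product, Finset.card_singleton, hcY, one_mul]
      omega
    · -- both horizontal
      by_cases hH0 : H = 0
      · omega
      · have hy' : b.2 - a.2 = (H : ℤ) ∨ b.2 - a.2 = -(H : ℤ) := by
          rcases hε with rfl | rfl
          · left; rw [hy, mul_one]
          · right; rw [hy]; ring
        have hne : a.2 ≠ b.2 := by intro h; omega
        have hint : (A ∩ B).card ≤ 1 := by
          apply Finset.card_le_one.mpr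
          intro u hu v hv
          exfalso
          rw [Finset.mem_inter, hAeq, hBeq, Finset.mem_product,
            Finset.mem_product, Finset.mem_singleton, Finset.mem_singleton] at hu
          exact hne (hu.1.2.symm.trans hu.2.2)
        have hcA : A.card = W + 1 := by
          rw [hAeq, Finset.card_product, Finset.card_singleton, hcX, mul_one]
        have hcB : B.card = W + 1 := by
          rw [hBeq, Finset.card_product, Finset.card_singleton, hcX, mul_one]
        omega

theorem stmt5 (n : ℕ) (hn : 1 ≤ n) (m : ℕ) (k : Fin m → ℕ) (hk : ∀ i, 1 ≤ k i)
    (p : Fin m → ℕ → ℤ × ℤ)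
    (hgrid : ∀ i, ∀ j ≤ k i,
      (p i j).1 ∈ Set.Icc (0 : ℤ) (n : ℤ) ∧ (p i j).2 ∈ Set.Icc (0 : ℤ) (n : ℤ))
    (hmono : ∀ i,
      (∀ j < k i, p i (j + 1) - p i j ∈ ({(1, 0), (0, 1)} : Set (ℤ × ℤ))) ∨
      (∀ j < k i, p i (j + 1) - p i j ∈ ({(1, 0), (0, -1)} : Set (ℤ × ℤ))))
    (hbd : ∀ i, onBd n (p i 0) ∧ onBd n (p i (k i)))
    (R : Fin m → Set (ℤ × ℤ))
    (hR : ∀ i, R i = Set.uIcc (p i 0).1 (p i (k i)).1 ×ˢ Set.uIcc (p i 0).2 (p i (k i)).2)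
    (hdisj : ∀ i j, i ≠ j → Disjoint (R i) (R j)) :
    ∑ i, ((Finset.Icc 1 (k i - 1)).filter
        (fun j => p i (j + 1) - p i j ≠ p i j - p i (j - 1))).card ≤ 4 * (n + 1) := by
  classical
  choose S hS1 hS2 hS3 using fun i =>
    path_bound n (k i) (hk i) (p i) (hgrid i) (hmono i) (hbd i).1 (hbd i).2
  have hSdisj : ∀ i ∈ Finset.univ, ∀ j ∈ Finset.univ, i ≠ j →
      Disjoint (S i) (S j) := by
    intro i _ j _ hij
    rw [← Finset.disjoint_coe]
    exact Set.disjoint_of_subset ((hR i).symm ▸ hS1 i) ((hR j).symm ▸ hS1 j)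
      (hdisj i j hij)
  calc ∑ i, ((Finset.Icc 1 (k i - 1)).filter
        (fun j => p i (j + 1) - p i j ≠ p i j - p i (j - 1))).card
      ≤ ∑ i, (S i).card := Finset.sum_le_sum (fun i _ => hS3 i)
    _ = (Finset.univ.biUnion S).card := (Finset.card_biUnion hSdisj).symm
    _ ≤ (Bfin n).card := Finset.card_le_card
        (Finset.biUnion_subset.mpr (fun i _ => hS2 i))
    _ ≤ 4 * (n + 1) := card_Bfin n
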